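/- Let R be a commutative noetherian ring, A a finite R-algebra, and I, J indecomposable injective left A-modules with associated primes p and q in Spec(R) respectively. If Hom_A(I, J) ≠ 0 then p ⊆ q. -/

import Mathlib

/-- A module is indecomposable if it is nonzero and is not the direct sum of two nonzero
submodules. -/
def Module.Indecomposable (A : Type*) [Ring A] (M : Type*) [AddCommGroup M]
    [Module A M] : Prop :=
  Nontrivial M ∧ ∀ N N' : Submodule A M, IsCompl N N' → N = ⊥ ∨ N' = ⊥

section Uniform

variable {A : Type*} [Ring A] {E : Type*} [AddCommGroup E] [Module A E]

/-- An indecomposable injective module is uniform: any two nonzero submodules intersect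
nontrivially. -/
theorem Module.Indecomposable.inf_ne_bot [Module.Injective A E]
    (hind : Module.Indecomposable A E) (N N' : Submodule A E)
    (hN : N ≠ ⊥) (hN' : N' ≠ ⊥) : N ⊓ N' ≠ ⊥ := by
  intro hint
  -- `S` : essential extensions of `N`
  set S : Set (Submodule A E) := {K | N ≤ K ∧ ∀ L ≤ K, L ⊓ N = ⊥ → L = ⊥} with hSdef
  have hNS : N ∈ S := ⟨le_rfl, fun L hL h => by rwa [inf_eq_left.mpr hL] at h⟩
  obtain ⟨H, hNH, hHmax⟩ : ∃ H, N ≤ H ∧ Maximal (· ∈ S) H := by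
    refine zorn_le_nonempty₀ S ?_ N hNS
    intro c hcS hchain K hKc
    refine ⟨sSup c, ⟨le_trans (hcS hKc).1 (le_sSup hKc), ?_⟩, fun z hz => le_sSup hz⟩
    intro L hL hLN
    by_contra hLbot
    obtain ⟨w, hwL, hw0⟩ := (Submodule.ne_bot_iff L).mp hLbot
    obtain ⟨K', hK'c, hwK'⟩ :=
      (Submodule.mem_sSup_of_directed ⟨K, hKc⟩ hchain.directedOn).mp (hL hwL)
    have hspan : Submodule.span A {w} = ⊥ := by
      refine (hcS hK'c).2 _ (Submodule.span_le.mpr (Set.singleton_subset_iff.mpr hwK')) ?_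
      refine le_bot_iff.mp ?_
      calc Submodule.span A {w} ⊓ N
          ≤ L ⊓ N := inf_le_inf_right N (Submodule.span_le.mpr (Set.singleton_subset_iff.mpr hwL))
        _ = ⊥ := hLN
    exact hw0 (Submodule.span_singleton_eq_bot.mp hspan)
  have hHS : H ∈ S := hHmax.1
  have hHN' : H ⊓ N' = ⊥ := by
    refine hHS.2 (H ⊓ N') inf_le_left (le_bot_iff.mp ?_)
    calc (H ⊓ N') ⊓ N ≤ N ⊓ N' := le_inf inf_le_right (inf_le_left.trans inf_le_right)
      _ = ⊥ := hint
  -- `S'` : complements of `H` containing `N'`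
  set S' : Set (Submodule A E) := {K | N' ≤ K ∧ K ⊓ H = ⊥} with hS'def
  have hN'S' : N' ∈ S' := ⟨le_rfl, by rw [inf_comm]; exact hHN'⟩
  obtain ⟨C, hN'C, hCmax⟩ : ∃ C, N' ≤ C ∧ Maximal (· ∈ S') C := by
    refine zorn_le_nonempty₀ S' ?_ N' hN'S'
    intro c hcS hchain K hKc
    refine ⟨sSup c, ⟨le_trans (hcS hKc).1 (le_sSup hKc), ?_⟩, fun z hz => le_sSup hz⟩
    rw [eq_bot_iff]
    rintro w hw
    obtain ⟨hw1, hw2⟩ := Submodule.mem_inf.mp hw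
    obtain ⟨K', hK'c, hwK'⟩ :=
      (Submodule.mem_sSup_of_directed ⟨K, hKc⟩ hchain.directedOn).mp hw1
    have h := (hcS hK'c).2
    rw [← h]
    exact Submodule.mem_inf.mpr ⟨hwK', hw2⟩
  have hCS' : C ∈ S' := hCmax.1
  have hCH : C ⊓ H = ⊥ := hCS'.2
  -- `H ⊔ C` is essential in `E`
  have hess : ∀ L : Submodule A E, L ⊓ (H ⊔ C) = ⊥ → L = ⊥ := by
    intro L hL
    have h1 : (C ⊔ L) ⊓ H = ⊥ := by
      rw [eq_bot_iff]
      rintro w hw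
      obtain ⟨hw1, hwH⟩ := Submodule.mem_inf.mp hw
      obtain ⟨cc, hcc, l, hl, rfl⟩ := Submodule.mem_sup.mp hw1
      have hlmem : l ∈ L ⊓ (H ⊔ C) := by
        refine Submodule.mem_inf.mpr ⟨hl, ?_⟩
        have heq : l = (cc + l) - cc := by abel
        rw [heq]
        exact Submodule.sub_mem _ (Submodule.mem_sup_left hwH) (Submodule.mem_sup_right hcc)
      rw [hL] at hlmem
      have hl0 : l = 0 := hlmem
      rw [hl0, add_zero] at hwH ⊢
      have hmem : cc ∈ C ⊓ H := Submodule.mem_inf.mpr ⟨hcc, hwH⟩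
      rw [hCH] at hmem
      exact hmem
    have h2 : C ⊔ L = C :=
      le_antisymm (hCmax.2 ⟨hN'C.trans le_sup_left, h1⟩ le_sup_left) le_sup_left
    have hLC : L ≤ C := h2 ▸ le_sup_right
    rw [eq_bot_iff, ← hL]
    exact le_inf le_rfl (hLC.trans le_sup_right)
  -- image of `H` in `E ⧸ C` is essential
  set π : E →ₗ[A] E ⧸ C := C.mkQ with hπdef
  have hπC : ∀ cc ∈ C, π cc = 0 := by
    intro cc hcc
    rw [hπdef, Submodule.mkQ_apply]
    exact (Submodule.Quotient.mk_eq_zero C).mpr hcc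
  set πH : Submodule A (E ⧸ C) := H.map π with hπHdef
  have hπHess : ∀ Lb : Submodule A (E ⧸ C), Lb ⊓ πH = ⊥ → Lb = ⊥ := by
    intro Lb hLb
    have hLH : (Submodule.comap π Lb) ⊓ H = ⊥ := by
      rw [eq_bot_iff]
      rintro w hw
      obtain ⟨hw1, hw2⟩ := Submodule.mem_inf.mp hw
      have hπw : π w ∈ Lb ⊓ πH := Submodule.mem_inf.mpr ⟨hw1, ⟨w, hw2, rfl⟩⟩
      rw [hLb] at hπw
      have hwC : w ∈ C := by
        have hker : w ∈ LinearMap.ker π := hπw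
        rwa [hπdef, Submodule.ker_mkQ] at hker
      have hmem : w ∈ C ⊓ H := Submodule.mem_inf.mpr ⟨hwC, hw2⟩
      rw [hCH] at hmem
      exact hmem
    have hCle : C ≤ Submodule.comap π Lb := by
      intro cc hcc
      simp only [Submodule.mem_comap, hπC cc hcc]
      exact Submodule.zero_mem _
    have h2 : Submodule.comap π Lb = C :=
      le_antisymm (hCmax.2 ⟨hN'C.trans hCle, hLH⟩ hCle) hCle
    have h3 : Lb = Submodule.map π (Submodule.comap π Lb) := by
      rw [Submodule.map_comap_eq, hπdef, Submodule.range_mkQ, top_inf_eq]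
    rw [h3, h2, eq_bot_iff, Submodule.map_le_iff_le_comap]
    intro cc hcc
    simp only [Submodule.mem_comap, Submodule.mem_bot]
    exact hπC cc hcc
  -- the restriction of `π` to `H` is a bijection onto `πH`
  set σ : H →ₗ[A] πH := π.submoduleMap H with hσdef
  have hσinj : Function.Injective σ := by
    intro u v huv
    have h0 : π (u - v : H) = 0 := by
      have : (σ (u - v) : E ⧸ C) = 0 := by rw [map_sub, huv, sub_self]; rfl
      rwa [LinearMap.submoduleMap_coe_apply] at this
    have hker : ((u - v : H) : E) ∈ C := by
      have : ((u - v : H) : E) ∈ LinearMap.ker π := h0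
      rwa [hπdef, Submodule.ker_mkQ] at this
    have hmem : ((u - v : H) : E) ∈ C ⊓ H := Submodule.mem_inf.mpr ⟨hker, (u - v).2⟩
    rw [hCH] at hmem
    have : (u - v : H) = 0 := Subtype.ext hmem
    exact sub_eq_zero.mp (by exact_mod_cast congrArg Subtype.val this)
  set e₀ : H ≃ₗ[A] πH :=
    LinearEquiv.ofBijective σ ⟨hσinj, π.submoduleMap_surjective H⟩ with he₀def
  set ψ : πH →ₗ[A] E := H.subtype ∘ₗ (e₀.symm : πH →ₗ[A] H) with hψdef
  obtain ⟨h, hh⟩ := Module.Injective.out πH.subtype (Submodule.injective_subtype πH) ψ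
  have hkey : ∀ n ∈ H, h (π n) = n := by
    intro n hn
    have h1 : (e₀ ⟨n, hn⟩ : E ⧸ C) = π n := by
      rfl
    have h2 : h (π n) = ψ (e₀ ⟨n, hn⟩) := by rw [← hh (e₀ ⟨n, hn⟩)]; exact congrArg h h1.symm
    rw [h2, hψdef]
    simp only [LinearMap.coe_comp, Function.comp_apply, LinearEquiv.coe_coe,
      LinearEquiv.symm_apply_apply, Submodule.coe_subtype]
  set e : E →ₗ[A] E := h ∘ₗ π with hedef
  have heH : ∀ n ∈ H, e n = n := fun n hn => hkey n hn
  have hrangeH : LinearMap.range e = H := by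
    have hHle : H ≤ LinearMap.range e := fun n hn => ⟨n, heH n hn⟩
    refine (hHmax.2 ⟨hNH.trans hHle, ?_⟩ hHle).antisymm hHle
    intro L hLle hLN
    have hLH : L ⊓ H = ⊥ := by
      refine hHS.2 (L ⊓ H) inf_le_right (le_bot_iff.mp ?_)
      calc (L ⊓ H) ⊓ N ≤ L ⊓ N := inf_le_inf_right N inf_le_left
        _ = ⊥ := hLN
    have hch : Submodule.comap h L ⊓ πH = ⊥ := by
      rw [eq_bot_iff]
      rintro u hu
      obtain ⟨hu1, hu2⟩ := Submodule.mem_inf.mp hu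
      obtain ⟨n, hn, rfl⟩ := hu2
      have hnL : n ∈ L := by
        have : h (π n) ∈ L := hu1
        rwa [hkey n hn] at this
      have hmem : n ∈ L ⊓ H := Submodule.mem_inf.mpr ⟨hnL, hn⟩
      rw [hLH] at hmem
      have : n = (0 : E) := hmem
      rw [this, map_zero]
      exact Submodule.zero_mem _
    have hcomap : Submodule.comap h L = ⊥ := hπHess _ hch
    have hLrange : L ≤ LinearMap.range h := by
      refine hLle.trans ?_
      rw [hedef]
      exact LinearMap.range_comp_le_range π h
    have : L = Submodule.map h (Submodule.comap h L) := by
      rw [Submodule.map_comap_eq, inf_eq_right.mpr hLrange]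
    rw [this, hcomap, Submodule.map_bot]
  have hidem : ∀ x : E, e (e x) = e x := by
    intro x
    have : e x ∈ H := hrangeH ▸ LinearMap.mem_range_self e x
    exact heH _ this
  have hcompl : IsCompl (LinearMap.range e) (LinearMap.ker e) := by
    constructor
    · rw [disjoint_iff]
      rw [eq_bot_iff]
      rintro w hw
      obtain ⟨hw1, hw2⟩ := Submodule.mem_inf.mp hw
      have hwH : w ∈ H := hrangeH ▸ hw1
      have : e w = w := heH w hwH
      have hw0 : w = 0 := by rw [← this]; exact hw2
      simp [hw0]
    · rw [codisjoint_iff, eq_top_iff]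
      intro x _
      have : x = e x + (x - e x) := by abel
      rw [this]
      refine Submodule.add_mem_sup (LinearMap.mem_range_self e x) ?_
      simp only [LinearMap.mem_ker, map_sub, hidem, sub_self]
  rcases hind.2 _ _ hcompl with hb | hb
  · rw [hrangeH] at hb
    exact hN (le_bot_iff.mp (hb ▸ hNH))
  · have hCker : C ≤ LinearMap.ker e := by
      intro cc hcc
      simp only [LinearMap.mem_ker, hedef, LinearMap.coe_comp, Function.comp_apply,
        hπC cc hcc, map_zero]
    rw [hb] at hCker
    exact hN' (le_bot_iff.mp (hN'C.trans hCker))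

end Uniform

section Nilpotent

variable {R : Type*} [CommRing R] {A : Type*} [Ring A] [Algebra R A]
variable {E : Type*} [AddCommGroup E] [Module A E] [Module R E] [IsScalarTower R A E]

/-- Scalar multiplication by `s : R` as an `A`-linear endomorphism. -/
def smulAHom (s : R) : E →ₗ[A] E where
  toFun x := s • x
  map_add' x y := smul_add s x y
  map_smul' a x := by
    simp only [RingHom.id_apply]
    calc s • (a • x) = algebraMap R A s • (a • x) := (algebraMap_smul A s _).symm
      _ = (algebraMap R A s * a) • x := (mul_smul _ _ _).symm
      _ = (a * algebraMap R A s) • x := by rw [Algebra.commutes]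
      _ = a • (algebraMap R A s • x) := mul_smul _ _ _
      _ = a • (s • x) := by rw [algebraMap_smul]

@[simp] lemma smulAHom_apply (s : R) (x : E) : (smulAHom (A := A) s) x = s • x := rfl

/-- If some element of `R` with nontrivial kernel exists, every scalar acting with nontrivial
kernel on an indecomposable injective module acts locally nilpotently. -/
theorem locNilpotent [IsNoetherianRing R] [Module.Finite R A] [Module.Injective A E]
    (hind : Module.Indecomposable A E) (s : R) {y : E} (hy : y ≠ 0) (hsy : s • y = 0)
    (x : E) : ∃ n : ℕ, s ^ n • x = 0 := by
  set W : Submodule A E := Submodule.span A {x} with hWdef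
  set WR : Submodule R E := W.restrictScalars R with hWRdef
  -- `WR` is a finitely generated `R`-module
  have hWRfg : WR.FG := by
    have h1 : WR = Submodule.map ((LinearMap.toSpanSingleton A E x).restrictScalars R) ⊤ := by
      ext z
      simp only [hWRdef, Submodule.restrictScalars_mem, hWdef, Submodule.mem_span_singleton,
        Submodule.map_top, LinearMap.mem_range, LinearMap.coe_restrictScalars,
        LinearMap.toSpanSingleton_apply]
    rw [h1]
    exact Submodule.FG.map _ (Module.finite_def.mp ‹Module.Finite R A›)
  haveI hWRnoeth : IsNoetherian R WR := isNoetherian_of_fg_of_noetherian _ hWRfg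
  -- multiplication by `s ^ n` restricted to `WR`
  have hsmem : ∀ (n : ℕ) (z : E), z ∈ WR → s ^ n • z ∈ WR := by
    intro n z hz
    have : s ^ n • z = algebraMap R A (s ^ n) • z := (algebraMap_smul A _ _).symm
    rw [hWRdef, Submodule.restrictScalars_mem] at hz ⊢
    rw [this]
    exact Submodule.smul_mem W _ hz
  set msn : ℕ → (WR →ₗ[R] WR) := fun n =>
    (LinearMap.lsmul R E (s ^ n)).restrict (fun z hz => hsmem n z hz) with hmsndef
  have hmsn_apply : ∀ (n : ℕ) (w : WR), ((msn n w : WR) : E) = s ^ n • (w : E) := by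
    intro n w
    rw [hmsndef]
    rfl
  set Kset : ℕ → Submodule R WR := fun n => LinearMap.ker (msn n) with hKsetdef
  have hKmono : ∀ {m n : ℕ}, m ≤ n → Kset m ≤ Kset n := by
    intro m n hmn w hw
    have h1 : s ^ m • (w : E) = 0 := by
      have := hmsn_apply m w
      rw [LinearMap.mem_ker.mp hw] at this
      simpa using this.symm
    have h2 : s ^ n • (w : E) = 0 := by
      rw [← Nat.sub_add_cancel hmn, pow_add, mul_smul, h1, smul_zero]
    rw [hKsetdef, LinearMap.mem_ker]
    ext
    rw [hmsn_apply]
    exact h2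
  -- stabilization of the kernels
  obtain ⟨M, ⟨n₀, rfl⟩, hMmax⟩ :=
    set_has_maximal_iff_noetherian.mpr hWRnoeth {K | ∃ n, K = Kset n} ⟨Kset 0, 0, rfl⟩
  set n : ℕ := n₀ + 1 with hndef
  have hstab : Kset (n + n) ≤ Kset n := by
    have h1 : Kset n₀ ≤ Kset (n + n) := hKmono (by omega)
    have h2 : ¬ Kset n₀ < Kset (n + n) := hMmax _ ⟨n + n, rfl⟩
    have h3 : Kset (n + n) = Kset n₀ := le_antisymm (by by_contra hc; exact h2 (h1.lt_of_ne (fun he => hc (le_of_eq he.symm)))) h1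
    rw [h3]
    exact hKmono (by omega)
  -- the two submodules to which we apply uniformity
  set Wim : Submodule A E := Submodule.map (smulAHom (A := A) (s ^ n)) W with hWimdef
  set Kker : Submodule A E := LinearMap.ker (smulAHom (A := A) (s ^ n) : E →ₗ[A] E) with hKkerdef
  have hKker : Kker ≠ ⊥ := by
    rw [Submodule.ne_bot_iff]
    refine ⟨y, ?_, hy⟩
    rw [hKkerdef, LinearMap.mem_ker, smulAHom_apply, hndef, pow_succ, mul_smul, hsy, smul_zero]
  have hdisj : Wim ⊓ Kker = ⊥ := by
    rw [eq_bot_iff]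
    rintro z hz
    obtain ⟨hz1, hz2⟩ := Submodule.mem_inf.mp hz
    obtain ⟨w, hw, rfl⟩ := hz1
    have hz2' : s ^ n • (s ^ n • w) = 0 := hz2
    have hw2n : s ^ (n + n) • w = 0 := by rw [pow_add, mul_smul]; exact hz2'
    have hwWR : w ∈ WR := by rw [hWRdef, Submodule.restrictScalars_mem]; exact hw
    have hker : (⟨w, hwWR⟩ : WR) ∈ Kset (n + n) := by
      rw [hKsetdef, LinearMap.mem_ker]
      ext
      rw [hmsn_apply]
      exact hw2n
    have hkn : (⟨w, hwWR⟩ : WR) ∈ Kset n := hstab hker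
    have : s ^ n • w = 0 := by
      have := congrArg (Subtype.val) (LinearMap.mem_ker.mp hkn)
      rwa [hmsn_apply] at this
    simpa [Submodule.mem_bot, smulAHom_apply] using this
  have hWim : Wim = ⊥ := by
    by_contra hWim0
    exact hind.inf_ne_bot Wim Kker hWim0 hKker hdisj
  refine ⟨n, ?_⟩
  have hx : s ^ n • x ∈ Wim :=
    ⟨x, Submodule.mem_span_singleton_self x, rfl⟩
  rw [hWim] at hx
  simpa using hx

/-- Any two associated primes of an indecomposable injective module coincide (≤ direction). -/
theorem assocPrime_le [IsNoetherianRing R] [Module.Finite R A] [Module.Injective A E]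
    (hind : Module.Indecomposable A E) {P Q : Ideal R}
    (hP : IsAssociatedPrime P E) (hQ : IsAssociatedPrime Q E) : P ≤ Q := by
  obtain ⟨hPp, xP, hxP⟩ := isAssociatedPrime_iff.mp hP
  obtain ⟨hQp, xQ, hxQ⟩ := isAssociatedPrime_iff.mp hQ
  have hxP0 : xP ≠ 0 := by
    rintro rfl
    exact hPp.ne_top (by rw [hxP, Ideal.eq_top_iff_one, Submodule.mem_colon_singleton, smul_zero]
                         exact Submodule.zero_mem _)
  have hxQ0 : xQ ≠ 0 := by
    rintro rfl
    exact hQp.ne_top (by rw [hxQ, Ideal.eq_top_iff_one, Submodule.mem_colon_singleton, smul_zero]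
                         exact Submodule.zero_mem _)
  intro s hs
  have hsxP : s • xP = 0 := by
    rw [hxP] at hs
    rw [Submodule.mem_colon_singleton, Submodule.mem_bot] at hs; exact hs
  obtain ⟨n, hn⟩ := locNilpotent hind s hxP0 hsxP xQ
  have hsn : s ^ n ∈ Q := by
    rw [hxQ, Submodule.mem_colon_singleton, hn]; exact Submodule.zero_mem _
  exact hQp.mem_of_pow_mem n hsn

end Nilpotent

/-- Let `R` be a commutative noetherian ring, `A` a finite `R`-algebra, and `I`, `J`
indecomposable injective left `A`-modules with associated primes `p` and `q` in
`Spec R` respectively.  If `Hom_A(I, J) ≠ 0` then `p ⊆ q`. -/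
theorem assoc_prime_le_of_hom_ne_zero
    {R A : Type*} [CommRing R] [IsNoetherianRing R] [Ring A] [Algebra R A]
    [Module.Finite R A]
    (I : Type*) [AddCommGroup I] [Module A I] [Module R I]
    [IsScalarTower R A I] [Module.Injective A I]
    (J : Type*) [AddCommGroup J] [Module A J] [Module R J]
    [IsScalarTower R A J] [Module.Injective A J]
    (hindI : Module.Indecomposable A I) (hindJ : Module.Indecomposable A J)
    (p q : Ideal R) (hp : IsAssociatedPrime p I) (hq : IsAssociatedPrime q J)
    (f : I →ₗ[A] J) (hf : f ≠ 0) :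
    p ≤ q := by
  intro r hr
  obtain ⟨hpP, xp, hxp⟩ := isAssociatedPrime_iff.mp hp
  have hxp0 : xp ≠ 0 := by
    rintro rfl
    exact hpP.ne_top (by rw [hxp, Ideal.eq_top_iff_one, Submodule.mem_colon_singleton, smul_zero]
                         exact Submodule.zero_mem _)
  have hrxp : r • xp = 0 := by
    rw [hxp] at hr
    rw [Submodule.mem_colon_singleton, Submodule.mem_bot] at hr; exact hr
  obtain ⟨z, hz⟩ : ∃ z, f z ≠ 0 := by
    by_contra h
    push_neg at h
    exact hf (LinearMap.ext fun z => by simpa using h z)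
  obtain ⟨n, hn⟩ := locNilpotent hindI r hxp0 hrxp z
  have hfz : r ^ n • f z = 0 := by
    have hRlin : ∀ t : R, f (t • z) = t • f z := fun t => by
      rw [← algebraMap_smul A t z, map_smul, algebraMap_smul]
    rw [← hRlin, hn, map_zero]
  obtain ⟨P, hP, hannP⟩ := exists_le_isAssociatedPrime_of_isNoetherianRing R (f z) hz
  have hrn : r ^ n ∈ P := hannP (Submodule.mem_colon_singleton.mpr (by rw [hfz]; exact Submodule.zero_mem _))
  have hPq : P ≤ q := assocPrime_le hindJ hP hq
  exact hPq (hP.1.mem_of_pow_mem n hrn)
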